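/- Let B ∈ ℝ^{m×p}, C ∈ ℝ^{n×p} with m ≥ n, set A := B Cᵀ, and assume A has full rank n with polar decomposition A = W H. Then for every orthonormal matrix Q ∈ V(n,m), ‖B − Q C‖_F² − ‖B − W C‖_F² ≥ σ_min(A) · ‖W − Q‖_F², where σ_min(A) is the smallest singular value of A. -/

import Mathlib

open Matrix

lemma aux1 {k : ℕ} {M : Matrix (Fin k) (Fin k) ℝ} (hM : M.IsHermitian) {c : ℝ}
    (hc : ∀ i, c ≤ hM.eigenvalues i) : (M - c • 1).PosSemidef := by
  have hU : (hM.eigenvectorUnitary : Matrix (Fin k) (Fin k) ℝ) *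
      (star hM.eigenvectorUnitary : Matrix (Fin k) (Fin k) ℝ) = 1 :=
    Matrix.mem_unitaryGroup_iff.mp hM.eigenvectorUnitary.2
  have hd : (diagonal (fun i => hM.eigenvalues i - c) : Matrix (Fin k) (Fin k) ℝ)
      = diagonal (RCLike.ofReal ∘ hM.eigenvalues) - c • 1 := by
    ext i j
    by_cases h : i = j <;> simp [h, diagonal, Matrix.one_apply, Matrix.smul_apply]
  have key : M - c • 1 = (hM.eigenvectorUnitary : Matrix (Fin k) (Fin k) ℝ) *
      (diagonal (fun i => hM.eigenvalues i - c)) *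
      (star hM.eigenvectorUnitary : Matrix (Fin k) (Fin k) ℝ) := by
    conv_lhs => rw [hM.spectral_theorem, ← hU]
    rw [hd]; simp [Matrix.mul_sub, Matrix.sub_mul, Matrix.mul_smul, Matrix.smul_mul, Matrix.mul_one]
  rw [key]
  exact (posSemidef_diagonal_iff.mpr (fun i => by simpa using hc i)).mul_mul_conjTranspose_same _

lemma auxDiag {k : ℕ} {P : Matrix (Fin k) (Fin k) ℝ} (hP : P.PosSemidef) : 0 ≤ P.trace := by
  rw [Matrix.trace]
  refine Finset.sum_nonneg fun i _ => ?_
  have h := hP.dotProduct_mulVec_nonneg (Pi.single i 1)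
  simpa [dotProduct, Matrix.mulVec, Pi.single_apply, Matrix.diag] using h

lemma auxTrace {k : ℕ} {P : Matrix (Fin k) (Fin k) ℝ} (hP : P.PosSemidef)
    {K : Matrix (Fin k) (Fin k) ℝ} (hK : K.PosSemidef) : 0 ≤ (P * K).trace := by
  obtain ⟨S, hS1, hS2⟩ : ∃ S : Matrix (Fin k) (Fin k) ℝ, S.PosSemidef ∧ S * S = P :=
    by open scoped MatrixOrder in exact ⟨CFC.sqrt P, (CFC.sqrt_nonneg P).posSemidef, CFC.sqrt_mul_sqrt_self P hP.nonneg⟩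
  have h1 : P * K = S * (S * K) := by rw [← Matrix.mul_assoc, hS2]
  rw [h1, Matrix.trace_mul_comm, Matrix.mul_assoc]
  have h2 : (S * K * S).PosSemidef := by
    have h3 := hK.mul_mul_conjTranspose_same S
    rwa [hS1.1.eq] at h3
  rw [← Matrix.mul_assoc]; exact auxDiag h2

lemma auxFrob {a b : ℕ} (X : Matrix (Fin a) (Fin b) ℝ) :
    ∑ i, ∑ j, (X i j) ^ 2 = (Xᵀ * X).trace := by
  rw [Matrix.trace, Finset.sum_comm]
  simp [Matrix.mul_apply, Matrix.diag, sq]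

/-- Global error bound in Frobenius norm: if `A = BCᵀ` is of full rank `n` with polar
decomposition `A = WH`, then for any orthonormal `Q`,
`‖B − QC‖_F² − ‖B − WC‖_F² ≥ σ_min(A)·‖W − Q‖_F²`, where the smallest singular value
`σ_min(A)` is the square root of the smallest eigenvalue of `AᵀA`. -/
theorem stmt1 {m n p : ℕ} (hmn : n ≤ m)
    (B : Matrix (Fin m) (Fin p) ℝ) (C : Matrix (Fin n) (Fin p) ℝ)
    (W : Matrix (Fin m) (Fin n) ℝ) (H : Matrix (Fin n) (Fin n) ℝ)
    (hW : Wᵀ * W = 1) (hH : H.PosSemidef) (hpolar : B * Cᵀ = W * H)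
    (hrank : (B * Cᵀ).rank = n)
    (hAA : ((B * Cᵀ)ᵀ * (B * Cᵀ)).IsHermitian)
    (Q : Matrix (Fin m) (Fin n) ℝ) (hQ : Qᵀ * Q = 1) :
    (∑ i, ∑ j, (B i j - (Q * C) i j) ^ 2) - (∑ i, ∑ j, (B i j - (W * C) i j) ^ 2)
      ≥ Real.sqrt (⨅ i, hAA.eigenvalues i) * ∑ i, ∑ j, (W i j - Q i j) ^ 2 := by
  set c : ℝ := ⨅ i, hAA.eigenvalues i with hc
  set σ : ℝ := Real.sqrt c with hσ
  -- the matrix AᵀA equals H * H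
  have hHsym : Hᵀ = H := by
    ext i j; simpa using congrFun (congrFun hH.1 i) j
  have hM : (B * Cᵀ)ᵀ * (B * Cᵀ) = H * H := by
    rw [hpolar, Matrix.transpose_mul, hHsym, Matrix.mul_assoc, ← Matrix.mul_assoc Wᵀ W H, hW,
      Matrix.one_mul]
  have hMpsd : ((B * Cᵀ)ᵀ * (B * Cᵀ)).PosSemidef := posSemidef_conjTranspose_mul_self _
  have hcnn : 0 ≤ c := Real.iInf_nonneg fun i => hMpsd.eigenvalues_nonneg i
  have hcle : ∀ j, c ≤ hAA.eigenvalues j := fun j => ciInf_le (Finite.bddBelow_range _) j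
  have hPSD1 : ((B * Cᵀ)ᵀ * (B * Cᵀ) - c • 1).PosSemidef := aux1 hAA hcle
  rw [hM] at hPSD1
  -- σ ≤ every eigenvalue of H
  have hσle : ∀ i, σ ≤ hH.1.eigenvalues i := by
    intro i
    set μ : ℝ := hH.1.eigenvalues i with hμ
    set v : Fin n → ℝ := ⇑(hH.1.eigenvectorBasis i) with hv
    have hHv : H *ᵥ v = μ • v := hH.1.mulVec_eigenvectorBasis i
    have hvne : v ≠ 0 := by
      intro h
      exact hH.1.eigenvectorBasis.orthonormal.ne_zero i (by ext j; exact congrFun h j)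
    have hnn : 0 ≤ v ⬝ᵥ v := Finset.sum_nonneg fun j _ => mul_self_nonneg _
    have hvv : 0 < v ⬝ᵥ v := hnn.lt_of_ne fun h => hvne (dotProduct_self_eq_zero.mp h.symm)
    have hmv : (H * H - c • 1) *ᵥ v = (μ ^ 2 - c) • v := by
      rw [Matrix.sub_mulVec, ← Matrix.mulVec_mulVec, hHv, Matrix.mulVec_smul, hHv,
        Matrix.smul_mulVec, Matrix.one_mulVec, smul_smul, sub_smul, sq]
    have h2 := hPSD1.dotProduct_mulVec_nonneg v
    rw [hmv] at h2
    have h3 : 0 ≤ (μ ^ 2 - c) * (v ⬝ᵥ v) := by simpa [dotProduct_smul] using h2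
    have h4 : c ≤ μ ^ 2 := by nlinarith
    have h5 : 0 ≤ μ := hH.eigenvalues_nonneg i
    calc σ ≤ Real.sqrt (μ ^ 2) := Real.sqrt_le_sqrt h4
    _ = μ := Real.sqrt_sq h5
  -- key PSD facts
  have hHσ : (H - σ • 1).PosSemidef := aux1 hH.1 hσle
  have hKpsd : ((W - Q)ᵀ * (W - Q)).PosSemidef := posSemidef_conjTranspose_mul_self _
  have hmain := auxTrace hHσ hKpsd
  -- trace expansion for orthonormal U
  have expand : ∀ U : Matrix (Fin m) (Fin n) ℝ, Uᵀ * U = 1 →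
      ((B - U * C)ᵀ * (B - U * C)).trace
        = (Bᵀ * B).trace + (Cᵀ * C).trace - 2 * (H * (Wᵀ * U)).trace := by
    intro U hU
    have h0 : (U * C)ᵀ * (U * C) = Cᵀ * C := by
      rw [Matrix.transpose_mul, Matrix.mul_assoc, ← Matrix.mul_assoc Uᵀ U C, hU, Matrix.one_mul]
    have htr : (Bᵀ * (U * C)).trace = (H * (Wᵀ * U)).trace := by
      rw [Matrix.trace_mul_comm, Matrix.mul_assoc, Matrix.trace_mul_comm]
      have e4 : C * Bᵀ = (B * Cᵀ)ᵀ := by rw [Matrix.transpose_mul, Matrix.transpose_transpose]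
      rw [e4, hpolar, Matrix.transpose_mul, hHsym, Matrix.mul_assoc]
    have e1 : (B - U * C)ᵀ * (B - U * C)
        = Bᵀ * B + Cᵀ * C - Bᵀ * (U * C) - (Bᵀ * (U * C))ᵀ := by
      rw [Matrix.transpose_sub, Matrix.sub_mul, Matrix.mul_sub, Matrix.mul_sub, h0]
      simp only [Matrix.transpose_mul, Matrix.transpose_transpose, Matrix.mul_assoc]
      abel
    rw [e1, Matrix.trace_sub, Matrix.trace_sub, Matrix.trace_add, Matrix.trace_transpose, htr]
    ring
  have eQ := expand Q hQ
  have eW := expand W hW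
  rw [hW, Matrix.mul_one] at eW
  -- trace of H * K
  have eHK : (H * ((W - Q)ᵀ * (W - Q))).trace = 2 * H.trace - 2 * (H * (Wᵀ * Q)).trace := by
    have e2 : (W - Q)ᵀ * (W - Q) = 1 + 1 - Wᵀ * Q - Qᵀ * W := by
      rw [Matrix.transpose_sub, Matrix.sub_mul, Matrix.mul_sub, Matrix.mul_sub, hW, hQ]
      abel
    have e3 : (H * (Qᵀ * W)).trace = (H * (Wᵀ * Q)).trace := by
      rw [← Matrix.trace_transpose (H * (Qᵀ * W)), Matrix.transpose_mul, Matrix.transpose_mul,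
        Matrix.transpose_transpose, hHsym, Matrix.trace_mul_comm]
    rw [e2, Matrix.mul_sub, Matrix.mul_sub, Matrix.mul_add, Matrix.mul_one,
      Matrix.trace_sub, Matrix.trace_sub, Matrix.trace_add, e3]
    ring
  -- trace with the smul
  have eσK : ((H - σ • 1) * ((W - Q)ᵀ * (W - Q))).trace
      = (H * ((W - Q)ᵀ * (W - Q))).trace - σ * ((W - Q)ᵀ * (W - Q)).trace := by
    rw [Matrix.sub_mul, Matrix.trace_sub, Matrix.smul_mul, Matrix.one_mul, Matrix.trace_smul]
    simp
  have eWC : ∀ i j, (B i j - (W * C) i j) = (B - W * C) i j := fun i j => rfl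
  have fr1 : (∑ i, ∑ j, (B i j - (Q * C) i j) ^ 2) = ((B - Q * C)ᵀ * (B - Q * C)).trace := by
    rw [← auxFrob]; rfl
  have fr2 : (∑ i, ∑ j, (B i j - (W * C) i j) ^ 2) = ((B - W * C)ᵀ * (B - W * C)).trace := by
    rw [← auxFrob]; rfl
  have fr3 : (∑ i, ∑ j, (W i j - Q i j) ^ 2) = ((W - Q)ᵀ * (W - Q)).trace := by
    rw [← auxFrob]; rfl
  rw [fr1, fr2, fr3, eQ, eW]
  rw [eσK, eHK] at hmain
  linarith
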